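/- Every thick subset of ℤ₊ containing 0 contains an md-set; that is, for every thick set C ⊆ ℤ₊ with 0 ∈ C there exist an M-system (Y,S), a transitive point y ∈ Y and a neighborhood U of y such that N(y,U) ⊆ C. -/

import Mathlib

open Set Filter Topology Function

namespace PaperFormal

/-- The return-time set `N(x,U) = {n ∈ ℤ₊ : Tⁿ x ∈ U}`. -/
def retTimes {X : Type} (T : X → X) (x : X) (U : Set X) : Set ℕ :=
  {n : ℕ | T^[n] x ∈ U}

/-- A point is recurrent if `N(x,U)` is infinite for every neighborhood `U` of `x`. -/
def RecurrentPt {X : Type} [TopologicalSpace X] (T : X → X) (x : X) : Prop :=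
  ∀ U ∈ nhds x, (retTimes T x U).Infinite

/-- The (forward) orbit closure of a point. -/
def orbitClosure {X : Type} [TopologicalSpace X] (T : X → X) (x : X) : Set X :=
  closure (Set.range fun n : ℕ => T^[n] x)

/-- A pair `(x,y)` is proximal if `lim T^{nᵢ} x = lim T^{nᵢ} y` along some sequence `nᵢ`. -/
def ProximalPair {X : Type} [TopologicalSpace X] (T : X → X) (x y : X) : Prop :=
  ∃ (u : ℕ → ℕ) (z : X),
    Tendsto (fun i => T^[u i] x) atTop (nhds z) ∧
    Tendsto (fun i => T^[u i] y) atTop (nhds z)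

/-- A point `x` is distal if every `y` in its orbit closure proximal to `x` equals `x`. -/
def DistalPt {X : Type} [TopologicalSpace X] (T : X → X) (x : X) : Prop :=
  ∀ y ∈ orbitClosure T x, ProximalPair T x y → y = x

/-- `A` is a minimal set: nonempty, closed, invariant, with no proper such subset. -/
def IsMinimalSet {X : Type} [TopologicalSpace X] (T : X → X) (A : Set X) : Prop :=
  A.Nonempty ∧ IsClosed A ∧ Set.MapsTo T A A ∧
    ∀ B ⊆ A, B.Nonempty → IsClosed B → Set.MapsTo T B B → B = A

/-- A point is minimal (almost periodic) if its orbit closure is a minimal set. -/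
def IsMinimalPt {X : Type} [TopologicalSpace X] (T : X → X) (x : X) : Prop :=
  IsMinimalSet T (orbitClosure T x)

/-- A minimal system: no proper nonempty closed invariant subset. -/
def MinimalSys {X : Type} [TopologicalSpace X] (T : X → X) : Prop :=
  ∀ B : Set X, B.Nonempty → IsClosed B → Set.MapsTo T B B → B = Set.univ

/-- A transitive system: `N(U,V)` is infinite for all opene `U`, `V`. -/
def TransitiveSys {X : Type} [TopologicalSpace X] (T : X → X) : Prop :=
  ∀ U V : Set X, IsOpen U → IsOpen V → U.Nonempty → V.Nonempty →
    {n : ℕ | (U ∩ T^[n] ⁻¹' V).Nonempty}.Infinite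

/-- Transitivity of the subsystem on an invariant subset `A` (relative open sets). -/
def TransitiveOn {X : Type} [TopologicalSpace X] (T : X → X) (A : Set X) : Prop :=
  ∀ U V : Set X, IsOpen U → IsOpen V → (U ∩ A).Nonempty → (V ∩ A).Nonempty →
    {n : ℕ | (U ∩ A ∩ T^[n] ⁻¹' V).Nonempty}.Infinite

/-- A transitive point: a point with dense forward orbit. -/
def TransPt {X : Type} [TopologicalSpace X] (T : X → X) (x : X) : Prop :=
  Dense (Set.range fun n : ℕ => T^[n] x)

/-- Finite sums of the sequence `p` over nonempty finite index sets contained in `[n,∞)`. -/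
def FSfrom (p : ℕ → ℕ) (n : ℕ) : Set ℕ :=
  {m | ∃ α : Finset ℕ, α.Nonempty ∧ (∀ i ∈ α, n ≤ i) ∧ m = ∑ i ∈ α, p i}

/-- Finite sums of the sequence `p` over nonempty finite index sets. -/
def FS (p : ℕ → ℕ) : Set ℕ := FSfrom p 0

/-- An IP set: a set containing all finite sums of some sequence of natural numbers. -/
def IPSet (A : Set ℕ) : Prop :=
  ∃ p : ℕ → ℕ, (∀ i, 0 < p i) ∧ FS p ⊆ A

/-- An IP* set: a set meeting every IP set. -/
def IPStar (A : Set ℕ) : Prop :=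
  ∀ B : Set ℕ, IPSet B → (A ∩ B).Nonempty

/-- A syndetic set: a set with bounded gaps. -/
def Syndetic (S : Set ℕ) : Prop :=
  ∃ N : ℕ, ∀ m : ℕ, ∃ k ∈ S, m ≤ k ∧ k ≤ m + N

/-- A thick set: a set containing arbitrarily long runs of consecutive integers. -/
def Thick (S : Set ℕ) : Prop :=
  ∀ n : ℕ, ∃ m : ℕ, ∀ i ≤ n, m + i ∈ S

/-- A piecewise syndetic set: an intersection of a syndetic set with a thick set. -/
def PiecewiseSyndetic (A : Set ℕ) : Prop :=
  ∃ S₁ S₂ : Set ℕ, Syndetic S₁ ∧ Thick S₂ ∧ A = S₁ ∩ S₂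

/-- A thickly syndetic set: a set meeting every piecewise syndetic set. -/
def ThicklySyndetic (A : Set ℕ) : Prop :=
  ∀ B : Set ℕ, PiecewiseSyndetic B → (A ∩ B).Nonempty

/-- `x` is `F`-recurrent for the family `F` if `N(x,U) ∈ F` for every neighborhood `U`. -/
def FRecurrentPt {X : Type} [TopologicalSpace X] (F : Set (Set ℕ)) (T : X → X) (x : X) :
    Prop :=
  ∀ U ∈ nhds x, retTimes T x U ∈ F

/-- `x` is `F`-product recurrent: `(x,y)` is recurrent for every `F`-recurrent point `y`
in any topological dynamical system `(Y,S)`. -/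
def FProductRecurrent {X : Type} [TopologicalSpace X] (F : Set (Set ℕ)) (T : X → X)
    (x : X) : Prop :=
  ∀ (Y : Type) [MetricSpace Y] [CompactSpace Y] (S : Y → Y),
    Continuous S → Function.Surjective S →
      ∀ y : Y, FRecurrentPt F S y → RecurrentPt (Prod.map T S) (x, y)

/-- A joining of `(X,T)` and `(Y,S)`: a nonempty closed invariant subset of `X × Y`
projecting onto both coordinates. -/
def Joining {X Y : Type} [TopologicalSpace X] [TopologicalSpace Y]
    (T : X → X) (S : Y → Y) (J : Set (X × Y)) : Prop :=
  J.Nonempty ∧ IsClosed J ∧ Set.MapsTo (Prod.map T S) J J ∧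
    Prod.fst '' J = Set.univ ∧ Prod.snd '' J = Set.univ

/-- Two systems are disjoint if their only joining is the full product. -/
def DisjointSys {X Y : Type} [TopologicalSpace X] [TopologicalSpace Y]
    (T : X → X) (S : Y → Y) : Prop :=
  ∀ J : Set (X × Y), Joining T S J → J = Set.univ

/-- Property (★) of a point: for each neighborhood `V` of `x` there is `n` such that for
every finite set `S` whose distinct elements are at distance `≥ n`, some common shift `ℓ`
puts all of `T^{s+ℓ} x`, `s ∈ S`, inside `V`. -/
def StarProp {X : Type} [TopologicalSpace X] (T : X → X) (x : X) : Prop :=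
  ∀ V ∈ nhds x, ∃ n : ℕ, ∀ S : Finset ℕ,
    (∀ s ∈ S, ∀ t ∈ S, s < t → n ≤ t - s) →
      ∃ ℓ : ℕ, ∀ s ∈ S, T^[s + ℓ] x ∈ V

/-- `F` is an independence set for the pair `(U₀, U₁)`. -/
def IndepSet {X : Type} (T : X → X) (U₀ U₁ : Set X) (F : Set ℕ) : Prop :=
  ∀ J : Finset ℕ, ↑J ⊆ F → J.Nonempty → ∀ s : ℕ → Bool,
    (⋂ j ∈ J, T^[j] ⁻¹' (if s j then U₁ else U₀)).Nonempty

-- auxiliary development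
abbrev Y0 : Type := ℕ → Bool

def sh : Y0 → Y0 := fun z n => z (n + 1)

lemma sh_iter (n : ℕ) (z : Y0) (k : ℕ) : sh^[n] z k = z (k + n) := by
  induction n generalizing z k with
  | zero => rfl
  | succ n ih =>
    rw [Function.iterate_succ_apply]
    rw [ih (sh z) k]
    rfl

lemma sh_cont : Continuous sh :=
  continuous_pi fun n => continuous_apply (n + 1)

lemma sh_surj : Function.Surjective sh := by
  intro z
  refine ⟨fun n => if n = 0 then true else z (n - 1), ?_⟩
  funext k
  simp [sh]

lemma mem_nhds_cyl {z : Y0} {U : Set Y0} (h : U ∈ nhds z) :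
    ∃ N : ℕ, ∀ w : Y0, (∀ i < N, w i = z i) → w ∈ U := by
  rw [nhds_pi] at h
  obtain ⟨I, hIf, t, ht, hsub⟩ := Filter.mem_pi.1 h
  obtain ⟨N, hN⟩ := hIf.bddAbove
  refine ⟨N + 1, fun w hw => hsub ?_⟩
  intro i hi
  rw [hw i (Nat.lt_succ_of_le (hN hi))]
  exact mem_of_mem_nhds (ht i)

lemma cyl_nhds (z : Y0) (N : ℕ) : {w : Y0 | ∀ i < N, w i = z i} ∈ nhds z := by
  have : {w : Y0 | ∀ i < N, w i = z i} = ⋂ i ∈ Finset.range N, (fun w : Y0 => w i) ⁻¹' {z i} := by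
    ext w; simp [Finset.mem_range]
  rw [this]
  refine IsOpen.mem_nhds ?_ ?_
  · exact isOpen_biInter_finset fun i _ =>
      (continuous_apply i).isOpen_preimage _ (isOpen_discrete _)
  · simp

lemma shift_transitive : TransitiveSys sh := by
  rintro U V hU hV ⟨u, hu⟩ ⟨v, hv⟩
  obtain ⟨N, hN⟩ := mem_nhds_cyl (hU.mem_nhds hu)
  obtain ⟨M, hM⟩ := mem_nhds_cyl (hV.mem_nhds hv)
  refine Set.Infinite.mono ?_ (Set.Ici_infinite N)
  intro n (hn : N ≤ n)
  refine ⟨fun k => if k < n then u k else v (k - n), ?_, ?_⟩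
  · exact hN _ fun i hi => by simp [lt_of_lt_of_le hi hn]
  · show sh^[n] _ ∈ V
    refine hM _ fun i _ => ?_
    rw [sh_iter]
    simp

lemma iter_mul_fix {z : Y0} {N : ℕ} (hz : sh^[N] z = z) : ∀ q, sh^[N * q] z = z := by
  intro q
  induction q with
  | zero => simp
  | succ q ih =>
    have : N * (q + 1) = N * q + N := by ring
    rw [this, Function.iterate_add_apply, hz, ih]

lemma periodic_minimal {z : Y0} {N : ℕ} (hN : 0 < N) (hz : sh^[N] z = z) :
    IsMinimalPt sh z := by
  have hmod : ∀ n, sh^[n] z = sh^[n % N] z := by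
    intro n
    conv_lhs => rw [← Nat.mod_add_div n N, Function.iterate_add_apply, iter_mul_fix hz]
  have hrange : (Set.range fun n : ℕ => sh^[n] z) =
      (fun n : ℕ => sh^[n] z) '' (Set.Iio N) := by
    apply Set.Subset.antisymm
    · rintro _ ⟨n, rfl⟩
      exact ⟨n % N, Nat.mod_lt _ hN, (hmod n).symm⟩
    · rintro _ ⟨n, _, rfl⟩
      exact ⟨n, rfl⟩
  have hfin : (Set.range fun n : ℕ => sh^[n] z).Finite := by
    rw [hrange]; exact (Set.finite_Iio N).image _
  have hclosed : IsClosed (Set.range fun n : ℕ => sh^[n] z) := hfin.isClosed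
  have horb : orbitClosure sh z = Set.range fun n : ℕ => sh^[n] z := by
    rw [orbitClosure, hclosed.closure_eq]
  rw [IsMinimalPt, IsMinimalSet, horb]
  refine ⟨⟨z, 0, rfl⟩, hclosed, ?_, ?_⟩
  · rintro _ ⟨n, rfl⟩
    exact ⟨n + 1, by simp only []; rw [Function.iterate_succ_apply']⟩
  · intro B hB ⟨b, hb⟩ _ hmaps
    obtain ⟨r, rfl⟩ := hB hb
    have hiter : ∀ m, sh^[m] (sh^[r] z) ∈ B := by
      intro m
      induction m with
      | zero => exact hb
      | succ m ih =>
        rw [Function.iterate_succ_apply']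
        exact hmaps ih
    apply Set.Subset.antisymm hB
    rintro _ ⟨k, rfl⟩
    show sh^[k] z ∈ B
    obtain ⟨t, ht1, ht2⟩ : ∃ t, r ≤ t ∧ sh^[t] z = z := by
      refine ⟨N * (r / N + 1), ?_, iter_mul_fix hz _⟩
      exact le_of_lt (Nat.lt_mul_div_succ r hN)
    have hm : (k + t - r) + r = k + t := by omega
    have := hiter (k + t - r)
    rw [← Function.iterate_add_apply, hm, Function.iterate_add_apply, ht2] at this
    exact this

lemma minimal_dense : Dense {y : Y0 | IsMinimalPt sh y} := by
  rw [dense_iff_inter_open]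
  rintro U hU ⟨z, hz⟩
  obtain ⟨N, hN⟩ := mem_nhds_cyl (hU.mem_nhds hz)
  set P := max N 1 with hP
  have hP1 : 0 < P := le_max_right N 1
  have hNP : N ≤ P := le_max_left N 1
  refine ⟨fun k => z (k % P), ?_, ?_⟩
  · exact hN _ fun i hi => by rw [Nat.mod_eq_of_lt (lt_of_lt_of_le hi hNP)]
  · refine periodic_minimal hP1 ?_
    funext k
    rw [sh_iter]
    show z ((k + P) % P) = z (k % P)
    rw [Nat.add_mod_right]

/-! ### Construction of the transitive point -/

noncomputable def wd : ℕ → List Bool := fun k => (Encodable.decode (α := List Bool) k).getD []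

lemma wd_encode (l : List Bool) : wd (Encodable.encode l) = l := by
  simp [wd]

noncomputable def mfn (C : Set ℕ) (hC : Thick C) : ℕ → ℕ := fun n => (hC n).choose

lemma mfn_spec (C : Set ℕ) (hC : Thick C) (n : ℕ) : ∀ i ≤ n, mfn C hC n + i ∈ C :=
  (hC n).choose_spec

noncomputable def start (C : Set ℕ) (hC : Thick C) (P L : ℕ) : ℕ := mfn C hC (P + L) + P

lemma start_ge (C : Set ℕ) (hC : Thick C) (P L : ℕ) : P ≤ start C hC P L :=
  Nat.le_add_left P _

lemma start_mem (C : Set ℕ) (hC : Thick C) (P L : ℕ) :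
    ∀ i ≤ L, start C hC P L + i ∈ C := by
  intro i hi
  have := mfn_spec C hC (P + L) (P + i) (by omega)
  show mfn C hC (P + L) + P + i ∈ C
  rw [Nat.add_assoc]
  exact this

noncomputable def fblk (C : Set ℕ) (hC : Thick C) : ℕ → ℕ
  | 0 => start C hC 1 (wd 0).length
  | k + 1 => start C hC (fblk C hC k + (wd k).length + 1) (wd (k + 1)).length

lemma fblk_pos (C : Set ℕ) (hC : Thick C) (k : ℕ) : 1 ≤ fblk C hC k := by
  cases k with
  | zero => exact start_ge C hC 1 _
  | succ k => exact le_trans (by omega) (start_ge C hC _ _)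

lemma fblk_step (C : Set ℕ) (hC : Thick C) (k : ℕ) :
    fblk C hC k + (wd k).length < fblk C hC (k + 1) := by
  have := start_ge C hC (fblk C hC k + (wd k).length + 1) (wd (k + 1)).length
  show fblk C hC k + (wd k).length < start C hC _ _
  omega

lemma fblk_mono (C : Set ℕ) (hC : Thick C) {k k' : ℕ} (h : k < k') :
    fblk C hC k + (wd k).length < fblk C hC k' := by
  induction k' with
  | zero => omega
  | succ k' ih =>
    rcases Nat.lt_or_ge k k' with h' | h'
    · have := fblk_step C hC k'
      have := ih h'
      omega
    · have : k = k' := by omega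
      subst this
      exact fblk_step C hC k

lemma fblk_mem (C : Set ℕ) (hC : Thick C) (k : ℕ) :
    ∀ i ≤ (wd k).length, fblk C hC k + i ∈ C := by
  cases k with
  | zero => exact start_mem C hC 1 _
  | succ k => exact start_mem C hC _ _

open Classical in
noncomputable def ypt (C : Set ℕ) (hC : Thick C) : Y0 := fun j =>
  if j = 0 then true
  else if h : ∃ k, fblk C hC k ≤ j ∧ j < fblk C hC k + (wd k).length then
    (wd h.choose).getD (j - fblk C hC h.choose) false
  else false

lemma ypt_zero (C : Set ℕ) (hC : Thick C) : ypt C hC 0 = true := by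
  simp [ypt]

lemma ypt_block (C : Set ℕ) (hC : Thick C) (k i : ℕ) (hi : i < (wd k).length) :
    ypt C hC (fblk C hC k + i) = (wd k).getD i false := by
  classical
  set j := fblk C hC k + i with hj
  have hpos := fblk_pos C hC k
  have hj0 : ¬ j = 0 := by omega
  have hex : ∃ k', fblk C hC k' ≤ j ∧ j < fblk C hC k' + (wd k').length :=
    ⟨k, by omega, by omega⟩
  rw [ypt]
  rw [if_neg hj0, dif_pos hex]
  have hspec := hex.choose_spec
  have hck : hex.choose = k := by
    by_contra hne
    rcases Nat.lt_or_ge hex.choose k with h | h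
    · have := fblk_mono C hC h
      omega
    · have h' : k < hex.choose := by omega
      have := fblk_mono C hC h'
      omega
  rw [hck]
  congr 1
  omega

lemma ypt_ones (C : Set ℕ) (hC : Thick C) (h0 : (0 : ℕ) ∈ C) (j : ℕ)
    (hj : ypt C hC j = true) : j ∈ C := by
  classical
  rw [ypt] at hj
  split_ifs at hj with h1 h2
  · subst h1; exact h0
  · obtain ⟨hl, hr⟩ := h2.choose_spec
    have := fblk_mem C hC h2.choose (j - fblk C hC h2.choose) (by omega)
    have heq : fblk C hC h2.choose + (j - fblk C hC h2.choose) = j := by omega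
    rwa [heq] at this

lemma ypt_trans (C : Set ℕ) (hC : Thick C) : TransPt sh (ypt C hC) := by
  rw [TransPt, dense_iff_inter_open]
  rintro U hU ⟨z, hz⟩
  obtain ⟨N, hN⟩ := mem_nhds_cyl (hU.mem_nhds hz)
  set l := List.ofFn (fun i : Fin N => z i) with hl
  set k := Encodable.encode l with hk
  have hwd : wd k = l := wd_encode l
  have hlen : (wd k).length = N := by rw [hwd, hl, List.length_ofFn]
  refine ⟨sh^[fblk C hC k] (ypt C hC), hN _ ?_, ⟨_, rfl⟩⟩
  intro i hi
  rw [sh_iter, Nat.add_comm, ypt_block C hC k i (by omega)]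
  rw [hwd]
  rw [List.getD_eq_getElem l false (by rw [hl, List.length_ofFn]; omega)]
  simp [hl]

/-! ### Assembly -/

noncomputable def MS : MetricSpace Y0 :=
  PiNat.metricSpaceOfDiscreteUniformity (E := fun _ => Bool) fun _ => rfl


/-- every thick subset of `ℤ₊` containing `0` contains an md-set. -/
theorem statement_5 (C : Set ℕ) (hC : Thick C) (h0 : (0 : ℕ) ∈ C) :
    ∃ (Y : Type) (_ : MetricSpace Y) (_ : CompactSpace Y) (S : Y → Y),
      Continuous S ∧ Function.Surjective S ∧ TransitiveSys S ∧
        Dense {y : Y | IsMinimalPt S y} ∧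
        ∃ y : Y, TransPt S y ∧ ∃ U ∈ nhds y, retTimes S y U ⊆ C := by
  refine ⟨Y0, MS, (inferInstance : CompactSpace Y0), sh, sh_cont, sh_surj, shift_transitive, minimal_dense,
    ypt C hC, ypt_trans C hC, {u : Y0 | u 0 = true}, ?_, ?_⟩
  · have hopen : IsOpen ((fun u : Y0 => u 0) ⁻¹' ({true} : Set Bool)) :=
      (continuous_apply 0).isOpen_preimage _ (isOpen_discrete _)
    exact IsOpen.mem_nhds hopen (ypt_zero C hC)
  · intro n hn
    have : ypt C hC (0 + n) = true := by
      have := hn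
      rwa [retTimes, Set.mem_setOf_eq, Set.mem_setOf_eq, sh_iter] at this
    rw [Nat.zero_add] at this
    exact ypt_ones C hC h0 n this


end PaperFormal
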